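/- Let n > 2k, k ≥ t+3, and let F ⊆ C([n],k) be a maximal t-intersecting family with τ_t(F) = t+2. If every minimum t-cover of F contains a fixed t-set T ⊆ [n], then the number of minimum t-covers of F is at most (k−t)(k−t+1) + 1. -/

import Mathlib

open Finset

def Intersecting (t : ℕ) (𝓕 : Finset (Finset ℕ)) : Prop :=
  ∀ A ∈ 𝓕, ∀ B ∈ 𝓕, t ≤ (A ∩ B).card

def IsCover (n t : ℕ) (𝓕 : Finset (Finset ℕ)) (S : Finset ℕ) : Prop :=
  S ⊆ Finset.range n ∧ ∀ A ∈ 𝓕, t ≤ (S ∩ A).card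

noncomputable def tau (n t : ℕ) (𝓕 : Finset (Finset ℕ)) : ℕ :=
  sInf {m | ∃ S, IsCover n t 𝓕 S ∧ S.card = m}

open Classical in
noncomputable def minCovers (n t : ℕ) (𝓕 : Finset (Finset ℕ)) : Finset (Finset ℕ) :=
  ((Finset.range n).powerset).filter
    (fun S => (∀ A ∈ 𝓕, t ≤ (S ∩ A).card) ∧ S.card = tau n t 𝓕)

def MaximalIntersecting (n k t : ℕ) (𝓕 : Finset (Finset ℕ)) : Prop :=
  𝓕 ⊆ (Finset.range n).powersetCard k ∧ Intersecting t 𝓕 ∧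
    ∀ 𝓖 : Finset (Finset ℕ), 𝓖 ⊆ (Finset.range n).powersetCard k →
      Intersecting t 𝓖 → 𝓕 ⊆ 𝓖 → 𝓖 = 𝓕

lemma tau_le_of_isCover (n t : ℕ) (𝓕 : Finset (Finset ℕ)) {S : Finset ℕ}
    (h : IsCover n t 𝓕 S) : tau n t 𝓕 ≤ S.card :=
  Nat.sInf_le ⟨S, h, rfl⟩

lemma mem_minCovers (n t : ℕ) (𝓕 : Finset (Finset ℕ)) {S : Finset ℕ} :
    S ∈ minCovers n t 𝓕 ↔
      S ⊆ Finset.range n ∧ (∀ A ∈ 𝓕, t ≤ (S ∩ A).card) ∧ S.card = tau n t 𝓕 := by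
  classical
  simp [minCovers, Finset.mem_filter, Finset.mem_powerset, and_assoc]

lemma exists_minCover (n k t : ℕ) (𝓕 : Finset (Finset ℕ))
    (h𝓕 : 𝓕 ⊆ (Finset.range n).powersetCard k) (hkt : t ≤ k) :
    ∃ S, S ∈ minCovers n t 𝓕 := by
  have hcov : IsCover n t 𝓕 (Finset.range n) := by
    refine ⟨subset_rfl, fun A hA => ?_⟩
    have h1 := h𝓕 hA
    rw [Finset.mem_powersetCard] at h1
    have h2 : Finset.range n ∩ A = A := Finset.inter_eq_right.mpr h1.1
    rw [h2, h1.2]; exact hkt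
  have hne : {m | ∃ S, IsCover n t 𝓕 S ∧ S.card = m}.Nonempty :=
    ⟨(Finset.range n).card, Finset.range n, hcov, rfl⟩
  obtain ⟨S, hS, hcard⟩ := Nat.sInf_mem hne
  exact ⟨S, (mem_minCovers n t 𝓕).mpr ⟨hS.1, hS.2, hcard⟩⟩

lemma exists_bad (n t : ℕ) (𝓕 : Finset (Finset ℕ)) (S : Finset ℕ)
    (hS : S ⊆ Finset.range n) (h : S.card < tau n t 𝓕) :
    ∃ A ∈ 𝓕, (S ∩ A).card < t := by
  by_contra h'
  push_neg at h'
  exact absurd (tau_le_of_isCover n t 𝓕 ⟨hS, h'⟩) (by omega)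

theorem stmt3 (n k t : ℕ) (ht : 0 < t) (hk : t + 3 ≤ k) (hn : 2 * k < n)
    (𝓕 : Finset (Finset ℕ)) (hmax : MaximalIntersecting n k t 𝓕)
    (htau : tau n t 𝓕 = t + 2)
    (T : Finset ℕ) (hT : T ⊆ Finset.range n) (hTcard : T.card = t)
    (hTin : ∀ S ∈ minCovers n t 𝓕, T ⊆ S) :
    (minCovers n t 𝓕).card ≤ (k - t) * (k - t + 1) + 1 := by
  classical
  obtain ⟨hsub, hint, -⟩ := hmax
  have hkc : ∀ A ∈ 𝓕, A.card = k ∧ A ⊆ Finset.range n := by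
    intro A hA
    have h1 := hsub hA
    rw [Finset.mem_powersetCard] at h1
    exact ⟨h1.2, h1.1⟩
  have hCmem : ∀ S ∈ minCovers n t 𝓕,
      S ⊆ Finset.range n ∧ (∀ A ∈ 𝓕, t ≤ (S ∩ A).card) ∧ S.card = t + 2 := by
    intro S hS
    rw [mem_minCovers] at hS
    exact ⟨hS.1, hS.2.1, by rw [hS.2.2, htau]⟩
  have hpair : ∀ S ∈ minCovers n t 𝓕, (S \ T).card = 2 := by
    intro S hS
    rw [Finset.card_sdiff_of_subset (hTin S hS), (hCmem S hS).2.2, hTcard]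
    omega
  have hrecon : ∀ S ∈ minCovers n t 𝓕, S = T ∪ (S \ T) := fun S hS =>
    (Finset.union_sdiff_of_subset (hTin S hS)).symm
  have hsplit : ∀ S ∈ minCovers n t 𝓕, ∀ A ∈ 𝓕,
      t ≤ (T ∩ A).card + ((S \ T) ∩ A).card := by
    intro S hS A hA
    have h1 : S ∩ A ⊆ (T ∩ A) ∪ ((S \ T) ∩ A) := by
      intro x hx
      simp only [Finset.mem_inter, Finset.mem_union, Finset.mem_sdiff] at *
      by_cases hxT : x ∈ T
      · exact Or.inl ⟨hxT, hx.2⟩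
      · exact Or.inr ⟨⟨hx.1, hxT⟩, hx.2⟩
    calc t ≤ (S ∩ A).card := (hCmem S hS).2.1 A hA
      _ ≤ ((T ∩ A) ∪ ((S \ T) ∩ A)).card := Finset.card_le_card h1
      _ ≤ (T ∩ A).card + ((S \ T) ∩ A).card := Finset.card_union_le _ _
  have hdet : ∀ S ∈ minCovers n t 𝓕, ∀ z w : ℕ, z ∈ S \ T → w ∈ S \ T → z ≠ w →
      S = T ∪ {z, w} := by
    intro S hS z w hz hw hzw
    have h1 : ({z, w} : Finset ℕ) ⊆ S \ T := by
      intro x hx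
      rcases Finset.mem_insert.mp hx with h | h
      · subst h; exact hz
      · rw [Finset.mem_singleton.mp h]; exact hw
    have h2 : ({z, w} : Finset ℕ).card = 2 := Finset.card_pair hzw
    have h3 : ({z, w} : Finset ℕ) = S \ T :=
      Finset.eq_of_subset_of_card_le h1 (by rw [hpair S hS, h2])
    rw [hrecon S hS, ← h3]
  by_cases hcase : ∃ A ∈ 𝓕, (T ∩ A).card + 2 ≤ t
  · -- Case 1: a member meeting T in at most t-2 points
    obtain ⟨A, hA𝓕, hAle⟩ := hcase
    obtain ⟨S₀, hS₀⟩ := exists_minCover n k t 𝓕 hsub (by omega)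
    have hsub2 : ∀ S ∈ minCovers n t 𝓕, S \ T ⊆ A \ T := by
      intro S hS
      have h1 := hsplit S hS A hA𝓕
      have h2 : ((S \ T) ∩ A).card ≤ (S \ T).card :=
        Finset.card_le_card Finset.inter_subset_left
      have hp := hpair S hS
      have h5 : (S \ T) ∩ A = S \ T :=
        Finset.eq_of_subset_of_card_le Finset.inter_subset_left (by omega)
      intro x hx
      have hxA : x ∈ A := by rw [← h5] at hx; exact (Finset.mem_inter.mp hx).2
      exact Finset.mem_sdiff.mpr ⟨hxA, (Finset.mem_sdiff.mp hx).2⟩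
    have hcard1 : (minCovers n t 𝓕).card ≤ ((A \ T).powersetCard 2).card := by
      apply Finset.card_le_card_of_injOn (fun S => S \ T)
      · intro S hS
        simp only [Finset.mem_coe] at hS ⊢
        rw [Finset.mem_powersetCard]
        exact ⟨hsub2 S hS, hpair S hS⟩
      · intro S hS S' hS' h
        simp only [Finset.mem_coe] at hS hS'
        have h2 : S \ T = S' \ T := h
        rw [hrecon S hS, hrecon S' hS', h2]
    rw [Finset.card_powersetCard] at hcard1
    have hAcard := (hkc A hA𝓕).1
    have hATcard : (T ∩ A).card + 2 = t := by
      have h1 := hsplit S₀ hS₀ A hA𝓕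
      have h2 : ((S₀ \ T) ∩ A).card ≤ 2 := by
        have h3 : ((S₀ \ T) ∩ A).card ≤ (S₀ \ T).card :=
          Finset.card_le_card Finset.inter_subset_left
        rw [hpair S₀ hS₀] at h3
        exact h3
      omega
    have hAT : (A \ T).card = k - t + 2 := by
      have h1 := Finset.card_inter_add_card_sdiff A T
      have h2 : A ∩ T = T ∩ A := Finset.inter_comm A T
      rw [h2] at h1
      omega
    rw [hAT] at hcard1
    have hch : (k - t + 2).choose 2 ≤ (k - t) * (k - t + 1) + 1 := by
      obtain ⟨q, hq⟩ : ∃ q, k - t = q + 3 := ⟨k - t - 3, by omega⟩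
      rw [hq, Nat.choose_two_right]
      have e : q + 3 + 2 - 1 = q + 4 := by omega
      rw [e]
      have h1 : (q + 3 + 2) * (q + 4) ≤ 2 * ((q + 3) * (q + 3 + 1) + 1) := by nlinarith
      calc (q + 3 + 2) * (q + 4) / 2 ≤ 2 * ((q + 3) * (q + 3 + 1) + 1) / 2 :=
            Nat.div_le_div_right h1
        _ = (q + 3) * (q + 3 + 1) + 1 := by omega
    omega
  · -- Case 2: every member meets T in at least t-1 points
    push_neg at hcase
    have hwitness : ∀ x ∈ Finset.range n, x ∉ T →
        ∃ A ∈ 𝓕, (T ∩ A).card + 1 = t ∧ x ∉ A := by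
      intro x hxn hxT
      obtain ⟨A, hA, hlt⟩ := exists_bad n t 𝓕 (insert x T)
        (Finset.insert_subset hxn hT)
        (by rw [Finset.card_insert_of_notMem hxT, hTcard, htau]; omega)
      have hTA : (T ∩ A).card ≤ ((insert x T) ∩ A).card :=
        Finset.card_le_card (Finset.inter_subset_inter (Finset.subset_insert x T) subset_rfl)
      have h1 := hcase A hA
      refine ⟨A, hA, by omega, ?_⟩
      intro hxA
      have h2 : insert x (T ∩ A) ⊆ (insert x T) ∩ A := by
        intro y hy
        rcases Finset.mem_insert.mp hy with h | h
        · subst h; exact Finset.mem_inter.mpr ⟨Finset.mem_insert_self _ _, hxA⟩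
        · exact Finset.mem_inter.mpr
            ⟨Finset.mem_insert_of_mem (Finset.mem_inter.mp h).1, (Finset.mem_inter.mp h).2⟩
      have h3 := Finset.card_le_card h2
      rw [Finset.card_insert_of_notMem (fun hc => hxT (Finset.mem_inter.mp hc).1)] at h3
      omega
    -- the base witness A₀ for T
    obtain ⟨A₀, hA₀𝓕, hA₀lt⟩ := exists_bad n t 𝓕 T hT (by rw [hTcard, htau]; omega)
    have hA₀T : (T ∩ A₀).card + 1 = t := by have := hcase A₀ hA₀𝓕; omega
    have hBcardgen : ∀ A ∈ 𝓕, (T ∩ A).card + 1 = t → (A \ T).card = k - t + 1 := by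
      intro A hA hAT
      have h1 := Finset.card_inter_add_card_sdiff A T
      have h2 : A ∩ T = T ∩ A := Finset.inter_comm A T
      rw [h2] at h1
      have h3 := (hkc A hA).1
      omega
    have hB₀card : (A₀ \ T).card = k - t + 1 := hBcardgen A₀ hA₀𝓕 hA₀T
    obtain ⟨a, ha⟩ : (A₀ \ T).Nonempty := Finset.card_pos.mp (by omega)
    have haA₀ : a ∈ A₀ := (Finset.mem_sdiff.mp ha).1
    have haT : a ∉ T := (Finset.mem_sdiff.mp ha).2
    have han : a ∈ Finset.range n := (hkc A₀ hA₀𝓕).2 haA₀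
    obtain ⟨A₁, hA₁𝓕, hA₁T, haA₁⟩ := hwitness a han haT
    have hB₁card : (A₁ \ T).card = k - t + 1 := hBcardgen A₁ hA₁𝓕 hA₁T
    -- the witness sets pairwise intersect outside T
    have hc1 : 1 ≤ ((A₀ \ T) ∩ (A₁ \ T)).card := by
      have h1 : t ≤ (A₀ ∩ A₁).card := hint A₀ hA₀𝓕 A₁ hA₁𝓕
      have h2 : A₀ ∩ A₁ ⊆ (T ∩ A₁) ∪ ((A₀ \ T) ∩ (A₁ \ T)) := by
        intro x hx
        simp only [Finset.mem_inter, Finset.mem_union, Finset.mem_sdiff] at *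
        by_cases hxT : x ∈ T
        · exact Or.inl ⟨hxT, hx.2⟩
        · exact Or.inr ⟨⟨hx.1, hxT⟩, hx.2, hxT⟩
      have h3 := Finset.card_le_card h2
      have h4 := Finset.card_union_le (T ∩ A₁) ((A₀ \ T) ∩ (A₁ \ T))
      omega
    have hmeets : ∀ A ∈ 𝓕, (T ∩ A).card + 1 = t →
        ∀ S ∈ minCovers n t 𝓕, ((S \ T) ∩ (A \ T)).Nonempty := by
      intro A hA hAT S hS
      have h1 := hsplit S hS A hA
      have h2 : (S \ T) ∩ A ⊆ (S \ T) ∩ (A \ T) := by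
        intro x hx
        simp only [Finset.mem_inter, Finset.mem_sdiff] at *
        exact ⟨hx.1, hx.2, hx.1.2⟩
      have h3 := Finset.card_le_card h2
      apply Finset.card_pos.mp
      omega
    -- fiber bound: covers through a fixed point z
    have hfiber : ∀ z ∈ Finset.range n, z ∉ T →
        ((minCovers n t 𝓕).filter (fun S => z ∈ S \ T)).card ≤ k - t + 1 := by
      intro z hzn hzT
      obtain ⟨A, hA𝓕, hAT, hzA⟩ := hwitness z hzn hzT
      have hBcard : (A \ T).card = k - t + 1 := hBcardgen A hA𝓕 hAT
      rw [← hBcard]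
      apply Finset.card_le_card_of_injOn
        (fun S => if h : ((S \ T) ∩ (A \ T)).Nonempty then h.choose else 0)
      · intro S hS
        simp only [Finset.mem_coe] at hS ⊢
        rw [Finset.mem_filter] at hS
        have h := hmeets A hA𝓕 hAT S hS.1
        rw [dif_pos h]
        exact (Finset.mem_inter.mp h.choose_spec).2
      · intro S hS S' hS' heq
        simp only [Finset.mem_coe, Finset.mem_filter] at hS hS'
        have h := hmeets A hA𝓕 hAT S hS.1
        have h' := hmeets A hA𝓕 hAT S' hS'.1
        simp only [dif_pos h, dif_pos h'] at heq
        have hwS := Finset.mem_inter.mp h.choose_spec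
        have hwS' := Finset.mem_inter.mp h'.choose_spec
        have hwz : h.choose ≠ z := fun hc => hzA ((Finset.mem_sdiff.mp (hc ▸ hwS.2)).1)
        have e1 : S = T ∪ {z, h.choose} :=
          hdet S hS.1 z h.choose hS.2 hwS.1 (Ne.symm hwz)
        have hwz' : h'.choose ≠ z := fun hc => hzA ((Finset.mem_sdiff.mp (hc ▸ hwS'.2)).1)
        have e2 : S' = T ∪ {z, h'.choose} :=
          hdet S' hS'.1 z h'.choose hS'.2 hwS'.1 (Ne.symm hwz')
        rw [e1, e2, heq]
    -- split minCovers according to meeting C = B₀ ∩ B₁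
    set C : Finset ℕ := (A₀ \ T) ∩ (A₁ \ T) with hCdef
    have hsplitcard :=
      Finset.card_filter_add_card_filter_not
        (s := minCovers n t 𝓕) (p := fun S => ((S \ T) ∩ C).Nonempty)
    have hb1 : ((minCovers n t 𝓕).filter (fun S => ((S \ T) ∩ C).Nonempty)).card
        ≤ C.card * (k - t + 1) := by
      calc ((minCovers n t 𝓕).filter (fun S => ((S \ T) ∩ C).Nonempty)).card
          ≤ (C.biUnion (fun z => (minCovers n t 𝓕).filter (fun S => z ∈ S \ T))).card := by
            apply Finset.card_le_card
            intro S hS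
            rw [Finset.mem_filter] at hS
            obtain ⟨w, hw⟩ := hS.2
            rw [Finset.mem_biUnion]
            exact ⟨w, (Finset.mem_inter.mp hw).2,
              Finset.mem_filter.mpr ⟨hS.1, (Finset.mem_inter.mp hw).1⟩⟩
        _ ≤ ∑ z ∈ C, ((minCovers n t 𝓕).filter (fun S => z ∈ S \ T)).card :=
            Finset.card_biUnion_le
        _ ≤ ∑ z ∈ C, (k - t + 1) := by
            apply Finset.sum_le_sum
            intro z hz
            have hz0 : z ∈ A₀ \ T := (Finset.mem_inter.mp hz).1
            exact hfiber z ((hkc A₀ hA₀𝓕).2 (Finset.mem_sdiff.mp hz0).1)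
              (Finset.mem_sdiff.mp hz0).2
        _ = C.card * (k - t + 1) := by rw [Finset.sum_const, smul_eq_mul]
    have hb2 : ((minCovers n t 𝓕).filter (fun S => ¬ ((S \ T) ∩ C).Nonempty)).card
        ≤ ((A₀ \ T) \ (A₁ \ T)).card * ((A₁ \ T) \ (A₀ \ T)).card := by
      rw [← Finset.card_product]
      apply Finset.card_le_card_of_injOn
        (fun S => ((if h : ((S \ T) ∩ (A₀ \ T)).Nonempty then h.choose else 0),
                   (if h : ((S \ T) ∩ (A₁ \ T)).Nonempty then h.choose else 0)))
      · intro S hS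
        simp only [Finset.mem_coe] at hS ⊢
        rw [Finset.mem_filter] at hS
        have h0 := hmeets A₀ hA₀𝓕 hA₀T S hS.1
        have h1 := hmeets A₁ hA₁𝓕 hA₁T S hS.1
        rw [dif_pos h0, dif_pos h1, Finset.mem_product]
        have hz := Finset.mem_inter.mp h0.choose_spec
        have hw := Finset.mem_inter.mp h1.choose_spec
        constructor
        · apply Finset.mem_sdiff.mpr
          refine ⟨hz.2, fun hc => hS.2 ⟨h0.choose, Finset.mem_inter.mpr ⟨hz.1,
            Finset.mem_inter.mpr ⟨hz.2, hc⟩⟩⟩⟩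
        · apply Finset.mem_sdiff.mpr
          refine ⟨hw.2, fun hc => hS.2 ⟨h1.choose, Finset.mem_inter.mpr ⟨hw.1,
            Finset.mem_inter.mpr ⟨hc, hw.2⟩⟩⟩⟩
      · intro S hS S' hS' heq
        simp only [Finset.mem_coe, Finset.mem_filter] at hS hS'
        have h0 := hmeets A₀ hA₀𝓕 hA₀T S hS.1
        have h1 := hmeets A₁ hA₁𝓕 hA₁T S hS.1
        have h0' := hmeets A₀ hA₀𝓕 hA₀T S' hS'.1
        have h1' := hmeets A₁ hA₁𝓕 hA₁T S' hS'.1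
        simp only [dif_pos h0, dif_pos h1, dif_pos h0', dif_pos h1', Prod.mk.injEq] at heq
        have hz := Finset.mem_inter.mp h0.choose_spec
        have hw := Finset.mem_inter.mp h1.choose_spec
        -- z ≠ w : z ∉ A₁ \ T (else S would meet C), w ∈ A₁ \ T
        have hzw : h0.choose ≠ h1.choose := by
          intro hc
          exact hS.2 ⟨h0.choose, Finset.mem_inter.mpr ⟨hz.1,
            Finset.mem_inter.mpr ⟨hz.2, hc ▸ hw.2⟩⟩⟩
        have hz' := Finset.mem_inter.mp h0'.choose_spec
        have hw' := Finset.mem_inter.mp h1'.choose_spec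
        have hzw' : h0'.choose ≠ h1'.choose := by
          intro hc
          exact hS'.2 ⟨h0'.choose, Finset.mem_inter.mpr ⟨hz'.1,
            Finset.mem_inter.mpr ⟨hz'.2, hc ▸ hw'.2⟩⟩⟩
        have e1 : S = T ∪ {h0.choose, h1.choose} :=
          hdet S hS.1 _ _ hz.1 hw.1 hzw
        have e2 : S' = T ∪ {h0'.choose, h1'.choose} :=
          hdet S' hS'.1 _ _ hz'.1 hw'.1 hzw'
        rw [e1, e2, heq.1, heq.2]
    -- put the counts together
    have hd0 : C.card + ((A₀ \ T) \ (A₁ \ T)).card = k - t + 1 := by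
      have := Finset.card_inter_add_card_sdiff (A₀ \ T) (A₁ \ T)
      rw [hB₀card] at this
      exact this
    have hd1 : ((A₁ \ T) ∩ (A₀ \ T)).card + ((A₁ \ T) \ (A₀ \ T)).card = k - t + 1 := by
      have := Finset.card_inter_add_card_sdiff (A₁ \ T) (A₀ \ T)
      rw [hB₁card] at this
      exact this
    have hCsymm : ((A₁ \ T) ∩ (A₀ \ T)).card = C.card := by
      rw [hCdef, Finset.inter_comm]
    have hd0pos : 1 ≤ ((A₀ \ T) \ (A₁ \ T)).card :=
      Finset.card_pos.mpr ⟨a, Finset.mem_sdiff.mpr ⟨ha, fun hc => haA₁ (Finset.mem_sdiff.mp hc).1⟩⟩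
    -- final arithmetic
    obtain ⟨c', hc'⟩ : ∃ c', C.card = c' + 1 := ⟨C.card - 1, by omega⟩
    obtain ⟨d', hdd⟩ : ∃ d', ((A₀ \ T) \ (A₁ \ T)).card = d' + 1 :=
      ⟨((A₀ \ T) \ (A₁ \ T)).card - 1, by omega⟩
    have hd1eq : ((A₁ \ T) \ (A₀ \ T)).card = d' + 1 := by omega
    obtain ⟨q, hq⟩ : ∃ q, k - t = q := ⟨k - t, rfl⟩
    have hqcd : q = c' + d' + 1 := by omega
    have final : C.card * (k - t + 1) +
        ((A₀ \ T) \ (A₁ \ T)).card * ((A₁ \ T) \ (A₀ \ T)).card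
        ≤ (k - t) * (k - t + 1) + 1 := by
      rw [hc', hdd, hd1eq, hq, hqcd]
      have key : (c' + 1) * (c' + d' + 1 + 1) + (d' + 1) * (d' + 1) + c' * d'
          = (c' + d' + 1) * (c' + d' + 1 + 1) + 1 := by ring
      omega
    omega
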